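/- Let b > 2 and let F = F_{1,b}. Then q = ((2 − b)/5, (1 + 2b)/5) is a fixed point of F; the sets P = {(b−2, 1), (b−2, 2b−3), (2−b, 1)} and Q = {((b−2)/3, (2b−1)/3), ((2−b)/3, (2b−1)/3), ((2−b)/3, 1)} are periodic orbits of F of minimal period 3; and for every (x, y) ∈ ℝ² with (x, y) ≠ q there exists n ∈ ℕ such that F^n(x, y) ∈ P ∪ Q. -/
import Mathlib

/-- The piecewise linear map `F_{a,b}(x,y) = (|x| - y + a, x - |y| + b)`. -/
noncomputable def F (a b : ℝ) : ℝ × ℝ → ℝ × ℝ :=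
  fun p => (|p.1| - p.2 + a, p.1 - |p.2| + b)

/-- `S` is a periodic orbit of `f` of minimal period `n`: it is the (finite) orbit
`{p, f p, …, f^[n-1] p}` of some periodic point `p` of minimal period `n`. -/
def IsPeriodicOrbit (f : ℝ × ℝ → ℝ × ℝ) (n : ℕ) (S : Set (ℝ × ℝ)) : Prop :=
  ∃ p : ℝ × ℝ, Function.minimalPeriod f p = n ∧ 0 < n ∧
    S = (fun k : ℕ => f^[k] p) '' Set.Iio n

namespace CaseAB

/-- The six-point target set. -/
def Tset (b : ℝ) : Set (ℝ × ℝ) :=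
  (({(b-2, 1), (b-2, 2*b-3), (2-b, 1)} : Set (ℝ × ℝ)) ∪
   {((b-2)/3, (2*b-1)/3), ((2-b)/3, (2*b-1)/3), ((2-b)/3, 1)})

variable {b : ℝ}

lemma Fpp {x y : ℝ} (hx : 0 ≤ x) (hy : 0 ≤ y) :
    F 1 b (x, y) = (x - y + 1, x - y + b) := by
  simp [F, abs_of_nonneg hx, abs_of_nonneg hy]

lemma Fnp {x y : ℝ} (hx : x ≤ 0) (hy : 0 ≤ y) :
    F 1 b (x, y) = (-x - y + 1, x - y + b) := by
  simp [F, abs_of_nonpos hx, abs_of_nonneg hy]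

lemma Fpn {x y : ℝ} (hx : 0 ≤ x) (hy : y ≤ 0) :
    F 1 b (x, y) = (x - y + 1, x + y + b) := by
  simp [F, abs_of_nonneg hx, abs_of_nonpos hy]

lemma Fnn {x y : ℝ} (hx : x ≤ 0) (hy : y ≤ 0) :
    F 1 b (x, y) = (-x - y + 1, x + y + b) := by
  simp [F, abs_of_nonpos hx, abs_of_nonpos hy]

/- membership lemmas -/
lemma mem_2b1 : ((2 - b, 1) : ℝ × ℝ) ∈ Tset b := by
  simp [Tset]

lemma mem_Q1 : (((2-b)/3, (2*b-1)/3) : ℝ × ℝ) ∈ Tset b := by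
  simp [Tset]

/-- Terminal case: `t ≥ -1` lands on the P-cycle in one step. -/
lemma term1 (hb : 2 < b) {t : ℝ} (ht : -1 ≤ t) :
    F 1 b (t + 1, t + b) = (2 - b, 1) := by
  rw [Fpp (by linarith) (by linarith)]
  simp only [Prod.mk.injEq]; constructor <;> ring

/-- Terminal case: `-b ≤ t ≤ -b/2` lands on the P-cycle in three steps. -/
lemma term_mid (hb : 2 < b) {t : ℝ} (ht1 : -b ≤ t) (ht2 : t ≤ -b/2) :
    (F 1 b)^[3] (t + 1, t + b) = (2 - b, 1) := by
  have h1 : F 1 b (t + 1, t + b) = (-2*t - b, 1) := by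
    rw [Fnp (by linarith) (by linarith)]
    simp only [Prod.mk.injEq]; constructor <;> ring
  have h2 : F 1 b (-2*t - b, 1) = (-2*t - b, -2*t - 1) := by
    rw [Fpp (by linarith) (by linarith)]
    simp only [Prod.mk.injEq]; constructor <;> ring
  have h3 : F 1 b (-2*t - b, -2*t - 1) = (2 - b, 1) := by
    rw [Fpp (by linarith) (by linarith)]
    simp only [Prod.mk.injEq]; constructor <;> ring
  show F 1 b (F 1 b (F 1 b (t + 1, t + b))) = _
  rw [h1, h2, h3]

/-- Three-step return map on the line for `-b/2 < t < -1`. -/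
lemma three_step (hb : 2 < b) {t : ℝ} (ht1 : -b/2 < t) (ht2 : t < -1) :
    (F 1 b)^[3] (t + 1, t + b) = ((4*t + b + 1) + 1, (4*t + b + 1) + b) := by
  have h1 : F 1 b (t + 1, t + b) = (-2*t - b, 1) := by
    rw [Fnp (by linarith) (by linarith)]
    simp only [Prod.mk.injEq]; constructor <;> ring
  have h2 : F 1 b (-2*t - b, 1) = (2*t + b, -2*t - 1) := by
    rw [Fnp (by linarith) (by linarith)]
    simp only [Prod.mk.injEq]; constructor <;> ring
  have h3 : F 1 b (2*t + b, -2*t - 1) = ((4*t + b + 1) + 1, (4*t + b + 1) + b) := by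
    rw [Fpp (by linarith) (by linarith)]
    simp only [Prod.mk.injEq]; constructor <;> ring
  show F 1 b (F 1 b (F 1 b (t + 1, t + b))) = _
  rw [h1, h2, h3]

/-- The core induction for points on the line with `t ≥ -b`. -/
lemma line_core (hb : 2 < b) : ∀ k : ℕ, ∀ t : ℝ, -b ≤ t →
    (b - 2)/3 ≤ 4^k * |t - (-(b+1)/3)| →
    ∃ n, (F 1 b)^[n] (t + 1, t + b) ∈ Tset b := by
  intro k
  induction k with
  | zero =>
    intro t htb hk
    simp only [pow_zero, one_mul] at hk
    rcases le_or_gt (-1) t with h | h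
    · exact ⟨1, by rw [Function.iterate_one, term1 hb h]; exact mem_2b1⟩
    · -- t < -1 and |t - t*| ≥ (b-2)/3 forces t ≤ -b/2
      have ht2 : t ≤ -b/2 := by
        rcases le_abs.mp hk with h' | h' <;> [linarith; linarith [neg_sub t (-(b+1)/3) ▸ h']]
      exact ⟨3, by rw [term_mid hb htb ht2]; exact mem_2b1⟩
  | succ k ih =>
    intro t htb hk
    rcases le_or_gt (-1) t with h | h
    · exact ⟨1, by rw [Function.iterate_one, term1 hb h]; exact mem_2b1⟩
    rcases le_or_gt t (-b/2) with h2 | h2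
    · exact ⟨3, by rw [term_mid hb htb h2]; exact mem_2b1⟩
    · -- recurse
      have hrec := three_step hb h2 h
      have h4 : -b ≤ 4*t + b + 1 := by linarith
      have h5 : (b - 2)/3 ≤ 4^k * |4*t + b + 1 - (-(b+1)/3)| := by
        have : |4*t + b + 1 - (-(b+1)/3)| = 4 * |t - (-(b+1)/3)| := by
          rw [show 4*t + b + 1 - (-(b+1)/3) = 4 * (t - (-(b+1)/3)) by ring,
            abs_mul, abs_of_nonneg (by norm_num : (0:ℝ) ≤ 4)]
        rw [this]
        calc (b-2)/3 ≤ 4^(k+1) * |t - (-(b+1)/3)| := hk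
          _ = 4^k * (4 * |t - (-(b+1)/3)|) := by ring
      obtain ⟨n, hn⟩ := ih (4*t + b + 1) h4 h5
      exact ⟨n + 3, by rw [Function.iterate_add_apply, hrec]; exact hn⟩

/-- Points on the line with `t ≥ -b` eventually reach the target set. -/
lemma line_ge (hb : 2 < b) {t : ℝ} (htb : -b ≤ t) :
    ∃ n, (F 1 b)^[n] (t + 1, t + b) ∈ Tset b := by
  rcases eq_or_ne t (-(b+1)/3) with h | h
  · refine ⟨0, ?_⟩
    simp only [Function.iterate_zero, id_eq]
    have heq : ((t + 1, t + b) : ℝ × ℝ) = ((2-b)/3, (2*b-1)/3) := by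
      subst h; simp only [Prod.mk.injEq]; constructor <;> ring
    rw [heq]; exact mem_Q1
  · have hpos : 0 < |t - (-(b+1)/3)| := by
      rw [abs_pos]; intro hc; exact h (by linarith)
    obtain ⟨k, hk⟩ := pow_unbounded_of_one_lt (((b-2)/3) / |t - (-(b+1)/3)|)
      (by norm_num : (1:ℝ) < 4)
    refine line_core hb k t htb ?_
    have := (div_lt_iff₀ hpos).mp hk
    linarith

/-- From the first quadrant, one step lands on the line. -/
lemma quad_step (hb : 2 < b) {x y : ℝ} (hx : 0 ≤ x) (hy : 0 ≤ y) (hxy : -b ≤ x - y) :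
    ∃ n, (F 1 b)^[n] (x, y) ∈ Tset b := by
  obtain ⟨n, hn⟩ := line_ge hb hxy
  refine ⟨n + 1, ?_⟩
  rw [Function.iterate_add_apply, Function.iterate_one,
    Fpp hx hy]
  exact hn

/-- Climbing lemma: if `x ≥ 0` and `y < 0`, the orbit eventually reaches the target. -/
lemma climb (hb : 2 < b) : ∀ N : ℕ, ∀ x y : ℝ, 0 ≤ x → y < 0 → -(2*N) ≤ y →
    ∃ n, (F 1 b)^[n] (x, y) ∈ Tset b := by
  intro N
  induction N with
  | zero => intro x y hx hy hN; exfalso; push_cast at hN; linarith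
  | succ N ih =>
    intro x y hx hy hN
    have hstep : F 1 b (x, y) = (x - y + 1, x + y + b) := Fpn hx hy.le
    rcases lt_or_ge (x + y + b) 0 with h | h
    · -- still below axis, recurse
      have hx' : 0 ≤ x - y + 1 := by linarith
      have hN' : -(2*(N:ℝ)) ≤ x + y + b := by push_cast at hN ⊢; linarith
      obtain ⟨n, hn⟩ := ih (x - y + 1) (x + y + b) hx' h hN'
      exact ⟨n + 1, by rw [Function.iterate_add_apply, Function.iterate_one, hstep]; exact hn⟩
    · -- reached the quadrant; the line parameter is ≥ 1 - b > -b
      have hx' : 0 ≤ x - y + 1 := by linarith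
      have hxy : -b ≤ (x - y + 1) - (x + y + b) := by linarith
      obtain ⟨n, hn⟩ := quad_step hb hx' h hxy
      exact ⟨n + 1, by rw [Function.iterate_add_apply, Function.iterate_one, hstep]; exact hn⟩

/-- Every point of the line eventually reaches the target set. -/
lemma line_all (hb : 2 < b) (t : ℝ) :
    ∃ n, (F 1 b)^[n] (t + 1, t + b) ∈ Tset b := by
  rcases le_or_gt (-b) t with h | h
  · exact line_ge hb h
  · -- t < -b : both coordinates negative
    have hstep : F 1 b (t + 1, t + b) = (-2*t - b, 2*t + 2*b + 1) := by
      rw [Fnn (by linarith) (by linarith)]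
      simp only [Prod.mk.injEq]; constructor <;> ring
    have hx : (0:ℝ) ≤ -2*t - b := by linarith
    rcases lt_or_ge (2*t + 2*b + 1) 0 with h2 | h2
    · obtain ⟨N, hN⟩ := exists_nat_ge (-(2*t + 2*b + 1)/2)
      have hN' : -(2*(N:ℝ)) ≤ 2*t + 2*b + 1 := by
        rw [div_le_iff₀ (by norm_num : (0:ℝ) < 2)] at hN
        linarith
      obtain ⟨n, hn⟩ := climb hb N _ _ hx h2 hN'
      exact ⟨n + 1, by rw [Function.iterate_add_apply, Function.iterate_one, hstep]; exact hn⟩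
    · have hxy : -b ≤ (-2*t - b) - (2*t + 2*b + 1) := by linarith
      obtain ⟨n, hn⟩ := quad_step hb hx h2 hxy
      exact ⟨n + 1, by rw [Function.iterate_add_apply, Function.iterate_one, hstep]; exact hn⟩

/-- Every point with nonnegative first coordinate eventually reaches the target. -/
lemma nonnegX (hb : 2 < b) {x y : ℝ} (hx : 0 ≤ x) :
    ∃ n, (F 1 b)^[n] (x, y) ∈ Tset b := by
  rcases le_or_gt 0 y with hy | hy
  · obtain ⟨n, hn⟩ := line_all hb (x - y)
    refine ⟨n + 1, ?_⟩
    rw [Function.iterate_add_apply, Function.iterate_one, Fpp hx hy]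
    exact hn
  · obtain ⟨N, hN⟩ := exists_nat_ge (-y/2)
    have hN' : -(2*(N:ℝ)) ≤ y := by
      rw [div_le_iff₀ (by norm_num : (0:ℝ) < 2)] at hN
      linarith
    exact climb hb N x y hx hy hN'

/-- The region where the map acts as the expanding rotation. -/
def Reg (p : ℝ × ℝ) : Prop := p.1 < 0 ∧ 0 ≤ p.2

/-- Four steps inside the region act as `v ↦ q + (-4)(v - q)`. -/
lemma four_step (hb : 2 < b) {r : ℝ × ℝ} (h0 : Reg r) (h1 : Reg (F 1 b r))
    (h2 : Reg ((F 1 b)^[2] r)) (h3 : Reg ((F 1 b)^[3] r)) :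
    (F 1 b)^[4] r = (2 - b - 4*r.1, 1 + 2*b - 4*r.2) := by
  obtain ⟨x, y⟩ := r
  have e1 : F 1 b (x, y) = (-x - y + 1, x - y + b) := Fnp h0.1.le h0.2
  rw [e1] at h1
  have e2 : F 1 b (-x - y + 1, x - y + b) = (2*y - b, -2*x + 1) := by
    rw [Fnp h1.1.le h1.2]; simp only [Prod.mk.injEq]; constructor <;> ring
  have h2' : Reg ((2*y - b, -2*x + 1) : ℝ × ℝ) := by
    have : (F 1 b)^[2] (x, y) = (2*y - b, -2*x + 1) := by
      show F 1 b (F 1 b (x, y)) = _; rw [e1, e2]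
    rwa [this] at h2
  have e3 : F 1 b (2*y - b, -2*x + 1) = (b + 2*x - 2*y, 2*x + 2*y - 1) := by
    rw [Fnp h2'.1.le h2'.2]; simp only [Prod.mk.injEq]; constructor <;> ring
  have h3' : Reg ((b + 2*x - 2*y, 2*x + 2*y - 1) : ℝ × ℝ) := by
    have : (F 1 b)^[3] (x, y) = (b + 2*x - 2*y, 2*x + 2*y - 1) := by
      show F 1 b (F 1 b (F 1 b (x, y))) = _; rw [e1, e2, e3]
    rwa [this] at h3
  have e4 : F 1 b (b + 2*x - 2*y, 2*x + 2*y - 1) = (2 - b - 4*x, 1 + 2*b - 4*y) := by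
    rw [Fnp h3'.1.le h3'.2]; simp only [Prod.mk.injEq]; constructor <;> ring
  show F 1 b (F 1 b (F 1 b (F 1 b (x, y)))) = _
  rw [e1, e2, e3, e4]

/-- If an orbit stays in the region forever, the point is the fixed point. -/
lemma escape (hb : 2 < b) {p : ℝ × ℝ}
    (H : ∀ n : ℕ, Reg ((F 1 b)^[n] p)) :
    p = ((2 - b)/5, (1 + 2*b)/5) := by
  obtain ⟨u, hu⟩ : ∃ u : ℝ, u = p.1 - (2 - b)/5 := ⟨_, rfl⟩
  obtain ⟨w, hw⟩ : ∃ w : ℝ, w = p.2 - (1 + 2*b)/5 := ⟨_, rfl⟩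
  have key : ∀ k : ℕ, (F 1 b)^[4*k] p =
      ((2 - b)/5 + (-4)^k * u, (1 + 2*b)/5 + (-4)^k * w) := by
    intro k
    induction k with
    | zero =>
      simp only [Nat.mul_zero, Function.iterate_zero, id_eq, pow_zero, one_mul, hu, hw,
        Prod.ext_iff]
      constructor <;> ring
    | succ k ih =>
      have hiter : (F 1 b)^[4*(k+1)] p = (F 1 b)^[4] ((F 1 b)^[4*k] p) := by
        rw [show 4*(k+1) = 4 + 4*k by ring, Function.iterate_add_apply]
      have hfour := four_step hb (H (4*k))
        (by have := H (4*k + 1); rwa [show 4*k+1 = 1+4*k by ring,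
              Function.iterate_add_apply, Function.iterate_one] at this)
        (by have := H (4*k + 2); rwa [show 4*k+2 = 2+4*k by ring,
              Function.iterate_add_apply] at this)
        (by have := H (4*k + 3); rwa [show 4*k+3 = 3+4*k by ring,
              Function.iterate_add_apply] at this)
      rw [hiter, hfour, ih]
      simp only [Prod.mk.injEq]
      constructor <;> · push_cast; ring
  -- bounds from the region
  have hub : ∀ k : ℕ, (-4:ℝ)^k * u < (b - 2)/5 := by
    intro k
    have := (H (4*k)).1
    rw [key k] at this
    simpa using by linarith [this]
  have hwb : ∀ k : ℕ, -((1 + 2*b)/5) ≤ (-4:ℝ)^k * w := by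
    intro k
    have := (H (4*k)).2
    rw [key k] at this
    linarith [this]
  -- u = 0
  have hu0 : u = 0 := by
    by_contra h
    rcases lt_or_gt_of_ne h with hneg | hpos
    · -- u < 0 : use odd powers, (-4)^(2k+1) * u = 4^(2k+1) * (-u) → ∞
      obtain ⟨m, hm⟩ := pow_unbounded_of_one_lt ((b-2)/5 / (-u)) (by norm_num : (1:ℝ) < 4)
      have h4 : ((b-2)/5) < 4^m * (-u) := by
        rw [div_lt_iff₀ (by linarith : (0:ℝ) < -u)] at hm; linarith
      have := hub (2*m + 1)
      have hc : (-4:ℝ)^(2*m+1) * u = 4^(2*m+1) * (-u) := by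
        rw [show ((-4:ℝ))^(2*m+1) = -(4^(2*m+1)) by
          rw [neg_pow]; simp [pow_succ, pow_mul]]
        ring
      rw [hc] at this
      have h5 : (4:ℝ)^m * (-u) ≤ 4^(2*m+1) * (-u) := by
        apply mul_le_mul_of_nonneg_right _ (by linarith)
        exact pow_le_pow_right₀ (by norm_num) (by omega)
      linarith
    · obtain ⟨m, hm⟩ := pow_unbounded_of_one_lt ((b-2)/5 / u) (by norm_num : (1:ℝ) < 4)
      have h4 : ((b-2)/5) < 4^m * u := by
        rw [div_lt_iff₀ hpos] at hm; linarith
      have := hub (2*m)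
      have hc : (-4:ℝ)^(2*m) * u = 4^(2*m) * u := by
        rw [show ((-4:ℝ))^(2*m) = 4^(2*m) by rw [neg_pow]; simp [pow_mul]]
      rw [hc] at this
      have h5 : (4:ℝ)^m * u ≤ 4^(2*m) * u := by
        apply mul_le_mul_of_nonneg_right _ (by linarith)
        exact pow_le_pow_right₀ (by norm_num) (by omega)
      linarith
  -- w = 0
  have hw0 : w = 0 := by
    by_contra h
    rcases lt_or_gt_of_ne h with hneg | hpos
    · obtain ⟨m, hm⟩ := pow_unbounded_of_one_lt ((1+2*b)/5 / (-w)) (by norm_num : (1:ℝ) < 4)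
      have h4 : ((1+2*b)/5) < 4^m * (-w) := by
        rw [div_lt_iff₀ (by linarith : (0:ℝ) < -w)] at hm; linarith
      have := hwb (2*m)
      have hc : (-4:ℝ)^(2*m) * w = -(4^(2*m) * (-w)) := by
        rw [show ((-4:ℝ))^(2*m) = 4^(2*m) by rw [neg_pow]; simp [pow_mul]]
        ring
      rw [hc] at this
      have h5 : (4:ℝ)^m * (-w) ≤ 4^(2*m) * (-w) := by
        apply mul_le_mul_of_nonneg_right _ (by linarith)
        exact pow_le_pow_right₀ (by norm_num) (by omega)
      linarith
    · obtain ⟨m, hm⟩ := pow_unbounded_of_one_lt ((1+2*b)/5 / w) (by norm_num : (1:ℝ) < 4)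
      have h4 : ((1+2*b)/5) < 4^m * w := by
        rw [div_lt_iff₀ hpos] at hm; linarith
      have := hwb (2*m + 1)
      have hc : (-4:ℝ)^(2*m+1) * w = -(4^(2*m+1) * w) := by
        rw [show ((-4:ℝ))^(2*m+1) = -(4^(2*m+1)) by
          rw [neg_pow]; simp [pow_succ, pow_mul]]
        ring
      rw [hc] at this
      have h5 : (4:ℝ)^m * w ≤ 4^(2*m+1) * w := by
        apply mul_le_mul_of_nonneg_right _ (by linarith)
        exact pow_le_pow_right₀ (by norm_num) (by omega)
      linarith
  have : p = ((2 - b)/5, (1 + 2*b)/5) := by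
    have h1 : p.1 = (2 - b)/5 := by rw [hu] at hu0; linarith
    have h2 : p.2 = (1 + 2*b)/5 := by rw [hw] at hw0; linarith
    exact Prod.ext h1 h2
  exact this

/-- Every point other than the fixed point eventually reaches the target set. -/
lemma global (hb : 2 < b) {p : ℝ × ℝ} (hp : p ≠ ((2 - b)/5, (1 + 2*b)/5)) :
    ∃ n, (F 1 b)^[n] p ∈ Tset b := by
  have hH : ¬ ∀ n : ℕ, Reg ((F 1 b)^[n] p) := fun H => hp (escape hb H)
  push_neg at hH
  obtain ⟨m, hm⟩ := hH
  rw [Reg, not_and_or, not_lt, not_le] at hm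
  set r := (F 1 b)^[m] p with hr
  rcases hm with h | h
  · -- r.1 ≥ 0
    obtain ⟨n, hn⟩ := nonnegX (y := r.2) hb h
    exact ⟨n + m, by rw [Function.iterate_add_apply, ← hr, ← Prod.mk.eta (p := r)]; exact hn⟩
  · -- r.2 < 0 : next point has x ≥ 0
    have hstep : 0 ≤ (F 1 b r).1 := by
      have : (F 1 b r).1 = |r.1| - r.2 + 1 := rfl
      rw [this]
      have := abs_nonneg r.1
      linarith
    obtain ⟨n, hn⟩ := nonnegX (y := (F 1 b r).2) hb hstep
    refine ⟨n + (1 + m), ?_⟩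
    rw [Function.iterate_add_apply, Function.iterate_add_apply, Function.iterate_one, ← hr,
      ← Prod.mk.eta (p := F 1 b r)]
    exact hn

lemma Iio3 : (Set.Iio 3 : Set ℕ) = {0, 1, 2} := by
  ext n; simp [Set.mem_Iio]; omega

lemma orbit_image (f : ℝ × ℝ → ℝ × ℝ) (p : ℝ × ℝ) :
    (fun k : ℕ => f^[k] p) '' Set.Iio 3 = {p, f p, f (f p)} := by
  rw [Iio3]
  simp [Set.image_insert_eq]

/-- The P-cycle computations. -/
lemma cycleP1 (hb : 2 < b) : F 1 b (b - 2, 1) = (b - 2, 2*b - 3) := by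
  rw [Fpp (by linarith) (by linarith)]
  simp only [Prod.mk.injEq]; constructor <;> ring

lemma cycleP2 (hb : 2 < b) : F 1 b (b - 2, 2*b - 3) = (2 - b, 1) := by
  rw [Fpp (by linarith) (by linarith)]
  simp only [Prod.mk.injEq]; constructor <;> ring

lemma cycleP3 (hb : 2 < b) : F 1 b (2 - b, 1) = (b - 2, 1) := by
  rw [Fnp (by linarith) (by linarith)]
  simp only [Prod.mk.injEq]; constructor <;> ring

/-- The Q-cycle computations. -/
lemma cycleQ1 (hb : 2 < b) : F 1 b ((b-2)/3, (2*b-1)/3) = ((2-b)/3, (2*b-1)/3) := by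
  rw [Fpp (by linarith) (by linarith)]
  simp only [Prod.mk.injEq]; constructor <;> ring

lemma cycleQ2 (hb : 2 < b) : F 1 b ((2-b)/3, (2*b-1)/3) = ((2-b)/3, 1) := by
  rw [Fnp (by linarith) (by linarith)]
  simp only [Prod.mk.injEq]; constructor <;> ring

lemma cycleQ3 (hb : 2 < b) : F 1 b ((2-b)/3, 1) = ((b-2)/3, (2*b-1)/3) := by
  rw [Fnp (by linarith) (by linarith)]
  simp only [Prod.mk.injEq]; constructor <;> ring

lemma minPeriod_of_three {f : ℝ × ℝ → ℝ × ℝ} {p : ℝ × ℝ}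
    (h3 : f (f (f p)) = p) (h1 : f p ≠ p) : Function.minimalPeriod f p = 3 := by
  have hper : Function.IsPeriodicPt f 3 p := by
    show f^[3] p = p
    show f (f (f p)) = p
    exact h3
  have hdvd := hper.minimalPeriod_dvd
  rcases (Nat.prime_three.eq_one_or_self_of_dvd _ hdvd) with h | h
  · exfalso
    exact h1 (Function.minimalPeriod_eq_one_iff_isFixedPt.mp h)
  · exact h

end CaseAB

open CaseAB in
/-- For `b > 2` and `F = F_{1,b}`: `q` is a fixed point, `P` and `Q` are 3-periodic
orbits, and every point other than `q` eventually lands in `P ∪ Q`. -/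
theorem case_a_one_b_gt_two (b : ℝ) (hb : 2 < b) :
    F 1 b ((2 - b)/5, (1 + 2*b)/5) = ((2 - b)/5, (1 + 2*b)/5) ∧
    IsPeriodicOrbit (F 1 b) 3 {(b-2, 1), (b-2, 2*b-3), (2-b, 1)} ∧
    IsPeriodicOrbit (F 1 b) 3
      {((b-2)/3, (2*b-1)/3), ((2-b)/3, (2*b-1)/3), ((2-b)/3, 1)} ∧
    ∀ x : ℝ × ℝ, x ≠ ((2 - b)/5, (1 + 2*b)/5) →
      ∃ n : ℕ, (F 1 b)^[n] x ∈
        (({(b-2, 1), (b-2, 2*b-3), (2-b, 1)} : Set (ℝ × ℝ)) ∪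
         {((b-2)/3, (2*b-1)/3), ((2-b)/3, (2*b-1)/3), ((2-b)/3, 1)}) := by
  refine ⟨?_, ?_, ?_, ?_⟩
  · rw [Fnp (by linarith) (by positivity)]
    simp only [Prod.mk.injEq]; constructor <;> ring
  · refine ⟨(b-2, 1), ?_, by norm_num, ?_⟩
    · refine minPeriod_of_three ?_ ?_
      · rw [cycleP1 hb, cycleP2 hb, cycleP3 hb]
      · rw [cycleP1 hb]
        intro hc
        have := (Prod.mk.injEq _ _ _ _ ▸ hc).2
        linarith
    · rw [orbit_image, cycleP1 hb, cycleP2 hb]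
  · refine ⟨((b-2)/3, (2*b-1)/3), ?_, by norm_num, ?_⟩
    · refine minPeriod_of_three ?_ ?_
      · rw [cycleQ1 hb, cycleQ2 hb, cycleQ3 hb]
      · rw [cycleQ1 hb]
        intro hc
        have := (Prod.mk.injEq _ _ _ _ ▸ hc).1
        have hb' : (2 - b)/3 < (b - 2)/3 := by linarith
        linarith
    · rw [orbit_image, cycleQ1 hb, cycleQ2 hb]
  · intro x hx
    exact global hb hx
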